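/- For a string x_1^n over alphabet {1,…,D} and any k strictly greater than the maximal repetition L(x_1^n) = max{m : some string w_1^m occurs at least twice in x_1^n}, the PPM_k probability equals the uniform probability: PPM_k(x_1^n) = D^{−n}. Consequently, the total PPM probability PPM(x_1^n) = (6/π²)∑_{k=−1}^∞ PPM_k(x_1^n)/(k+2)² can be computed as the finite sum (6/π²)∑_{k=0}^{L(x_1^n)} PPM_k(x_1^n)/(k+2)² + (1 − (6/π²)∑_{k=0}^{L(x_1^n)} 1/(k+2)²)·D^{−n}. -/

import Mathlib

/-- Number of occurrences of `w` as a substring of `x`. -/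
def subCount (D : ℕ) (w x : List (Fin D)) : ℕ :=
  ((Finset.range (x.length + 1 - w.length)).filter
    (fun i => (x.drop i).take w.length = w)).card

/-- Conditional PPM probability of order `k` of symbol `a` given preceding string `p`. -/
noncomputable def ppmCond (D k : ℕ) (p : List (Fin D)) (a : Fin D) : ℝ :=
  if p.length < k then 1 / D
  else (subCount D (p.drop (p.length - k) ++ [a]) p + 1) /
       (subCount D (p.drop (p.length - k)) p.dropLast + D)

/-- PPM probability of order `k` of the string `x`. -/
noncomputable def ppmK (D k n : ℕ) (x : Fin n → Fin D) : ℝ :=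
  ∏ i : Fin n, ppmCond D k ((List.ofFn x).take i) (x i)

/-- Maximal repetition: the largest length of a substring occurring at least twice. -/
noncomputable def maxRep (D n : ℕ) (x : Fin n → Fin D) : ℕ :=
  sSup {m : ℕ | ∃ w : List (Fin D), w.length = m ∧ 2 ≤ subCount D w (List.ofFn x)}

-- auxiliary lemmas

lemma two_le_subCount (D : ℕ) (w xl : List (Fin D)) {a b : ℕ} (hab : a ≠ b)
    (ha1 : a + w.length ≤ xl.length) (ha2 : (xl.drop a).take w.length = w)
    (hb1 : b + w.length ≤ xl.length) (hb2 : (xl.drop b).take w.length = w) :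
    2 ≤ subCount D w xl := by
  have : 1 < ((Finset.range (xl.length + 1 - w.length)).filter
      (fun i => (xl.drop i).take w.length = w)).card := by
    refine Finset.one_lt_card.mpr ⟨a, ?_, b, ?_, hab⟩ <;>
      simp only [Finset.mem_filter, Finset.mem_range] <;> constructor
    · omega
    · exact ha2
    · omega
    · exact hb2
  unfold subCount; omega

lemma maxRep_bdd (D n : ℕ) (x : Fin n → Fin D) :
    BddAbove {m : ℕ | ∃ w : List (Fin D), w.length = m ∧ 2 ≤ subCount D w (List.ofFn x)} := by
  refine ⟨n, fun m hm => ?_⟩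
  obtain ⟨w, hw, h2⟩ := hm
  by_contra h
  push_neg at h
  have : subCount D w (List.ofFn x) = 0 := by
    unfold subCount
    have : n + 1 - w.length = 0 := by omega
    simp [List.length_ofFn, this]
  omega

lemma no_two (D n : ℕ) (x : Fin n → Fin D) (w : List (Fin D))
    (hw : maxRep D n x < w.length) : subCount D w (List.ofFn x) < 2 := by
  by_contra h
  push_neg at h
  have : w.length ≤ maxRep D n x :=
    le_csSup (maxRep_bdd D n x) ⟨w, rfl, h⟩
  omega

lemma factor_uniform (D n : ℕ) (hD : 1 ≤ D) (x : Fin n → Fin D) {k : ℕ}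
    (hk : maxRep D n x < k) (i : Fin n) :
    ppmCond D k ((List.ofFn x).take i) (x i) = (D : ℝ)⁻¹ := by
  set xl := List.ofFn x with hxl
  have hxln : xl.length = n := by simp [hxl]
  have hin : (i : ℕ) < n := i.2
  set p := xl.take i with hp
  have hplen : p.length = i := by rw [hp, List.length_take, hxln]; omega
  unfold ppmCond
  by_cases hik : p.length < k
  · simp [hik, one_div]
  · -- k ≤ i
    rw [if_neg hik]
    rw [hplen] at hik ⊢
    push_neg at hik  -- hik : k ≤ i
    have hk1 : 1 ≤ k := by omega
    set ctx := p.drop ((i : ℕ) - k) with hctx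
    have hctx_eq : ctx = (xl.drop ((i:ℕ) - k)).take k := by
      rw [hctx, hp, List.drop_take]
      congr 1
      omega
    have hctx_len : ctx.length = k := by
      rw [hctx_eq, List.length_take, List.length_drop, hxln]
      omega
    -- occurrence of ctx at position i - k in xl
    have hocc_ctx : (xl.drop ((i:ℕ) - k)).take ctx.length = ctx := by
      rw [hctx_len]; exact hctx_eq.symm
    -- xl.take (i+1) = p ++ [x i]
    have htake_succ : xl.take ((i:ℕ) + 1) = p ++ [x i] := by
      rw [List.take_succ, hp]
      congr 1
      have : xl[(i:ℕ)]? = some (x i) := by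
        rw [hxl]
        rw [List.getElem?_eq_getElem (by simpa using hin)]
        simp
      rw [this]
      rfl
    -- occurrence of ctx ++ [x i] at position i - k in xl
    have hocc_w : (xl.drop ((i:ℕ) - k)).take (k + 1) = ctx ++ [x i] := by
      have h1 : (xl.drop ((i:ℕ) - k)).take (k+1) = (xl.take ((i:ℕ)+1)).drop ((i:ℕ) - k) := by
        rw [List.drop_take]
        congr 1
        omega
      rw [h1, htake_succ, List.drop_append_of_le_length (by rw [hplen]; omega)]
    -- numerator count is zero
    have hnum : subCount D (ctx ++ [x i]) p = 0 := by
      unfold subCount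
      rw [Finset.card_eq_zero, Finset.filter_eq_empty_iff]
      intro j hj
      simp only [Finset.mem_range] at hj
      rw [List.length_append, hctx_len, List.length_singleton, hplen] at hj
      rw [List.length_append, hctx_len, List.length_singleton]
      intro hocc
      -- j < i + 1 - (k + 1), i.e. j + k + 1 ≤ i
      have hjik : j + k + 1 ≤ (i:ℕ) := by omega
      -- occurrence at j in xl
      have hocc' : (xl.drop j).take (k+1) = ctx ++ [x i] := by
        have : (p.drop j).take (k+1) = (xl.drop j).take (k+1) := by
          rw [hp, List.drop_take, List.take_take]
          congr 1
          omega
        rw [← this]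
        simpa [hctx_len] using hocc
      have hwlen : (ctx ++ [x i]).length = k + 1 := by
        rw [List.length_append, hctx_len, List.length_singleton]
      have h2 : 2 ≤ subCount D (ctx ++ [x i]) xl :=
        two_le_subCount D _ xl (a := j) (b := (i:ℕ) - k) (by omega)
          (by rw [hwlen, hxln]; omega) (by rw [hwlen]; exact hocc')
          (by rw [hwlen, hxln]; omega) (by rw [hwlen]; exact hocc_w)
      have := no_two D n x (ctx ++ [x i]) (by
        rw [List.length_append, hctx_len, List.length_singleton]; omega)
      rw [← hxl] at this
      omega
    -- denominator count is zero
    have hpdl : p.dropLast = xl.take ((i:ℕ) - 1) := by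
      rw [List.dropLast_eq_take, hplen, hp, List.take_take]
      congr 1
      omega
    have hden : subCount D ctx p.dropLast = 0 := by
      unfold subCount
      rw [Finset.card_eq_zero, Finset.filter_eq_empty_iff]
      intro j hj
      simp only [Finset.mem_range] at hj
      rw [hctx_len] at hj ⊢
      have hdllen : p.dropLast.length = (i:ℕ) - 1 := by
        rw [hpdl, List.length_take, hxln]
        omega
      rw [hdllen] at hj
      intro hocc
      have hjik : j + k ≤ (i:ℕ) - 1 := by omega
      have hocc' : (xl.drop j).take k = ctx := by
        have : (p.dropLast.drop j).take k = (xl.drop j).take k := by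
          rw [hpdl, List.drop_take, List.take_take]
          congr 1
          omega
        rw [← this]
        exact hocc
      have h2 : 2 ≤ subCount D ctx xl :=
        two_le_subCount D _ xl (a := j) (b := (i:ℕ) - k) (by omega)
          (by rw [hctx_len, hxln]; omega) (by rw [hctx_len]; exact hocc')
          (by rw [hctx_len, hxln]; omega) hocc_ctx
      have := no_two D n x ctx (by rw [hctx_len]; omega)
      rw [← hxl] at this
      omega
    rw [hnum, hden]
    have hD0 : (D:ℝ) ≠ 0 := by positivity
    push_cast
    rw [zero_add, zero_add]
    exact one_div _

lemma ppmK_uniform (D : ℕ) (hD : 1 ≤ D) (n : ℕ) (x : Fin n → Fin D) :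
    ∀ k : ℕ, maxRep D n x < k → ppmK D k n x = ((D : ℝ) ^ n)⁻¹ := by
  intro k hk
  unfold ppmK
  rw [Finset.prod_congr rfl (fun i _ => factor_uniform D n hD x hk i)]
  simp [Finset.card_univ]

/-- The total PPM probability `(6/π²) ∑_{k=-1}^∞ PPM_k(x)/(k+2)²`,
reindexed by `j = k + 1` with `PPM_{-1}(x) = D^{-n}`. -/
noncomputable def ppmTotal (D n : ℕ) (x : Fin n → Fin D) : ℝ :=
  (6 / Real.pi ^ 2) * ∑' j : ℕ,
    (if j = 0 then ((D : ℝ) ^ n)⁻¹ else ppmK D (j - 1) n x) / ((j : ℝ) + 1) ^ 2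

theorem ppm_finite_sum (D : ℕ) (hD : 1 ≤ D) (n : ℕ) (x : Fin n → Fin D) :
    (∀ k : ℕ, maxRep D n x < k → ppmK D k n x = ((D : ℝ) ^ n)⁻¹) ∧
    ppmTotal D n x =
      (6 / Real.pi ^ 2) * (∑ k ∈ Finset.range (maxRep D n x + 1),
        ppmK D k n x / ((k : ℝ) + 2) ^ 2) +
      (1 - (6 / Real.pi ^ 2) * ∑ k ∈ Finset.range (maxRep D n x + 1),
        1 / ((k : ℝ) + 2) ^ 2) * ((D : ℝ) ^ n)⁻¹ := by
  have h1 := ppmK_uniform D hD n x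
  refine ⟨h1, ?_⟩
  set L := maxRep D n x with hL
  set u : ℝ := ((D : ℝ) ^ n)⁻¹ with hu
  set f : ℕ → ℝ := fun j => (if j = 0 then u else ppmK D (j - 1) n x) / ((j : ℝ) + 1) ^ 2
    with hf
  set g : ℕ → ℝ := fun j => u / ((j : ℝ) + 1) ^ 2 with hg
  have hfg : ∀ j, L + 2 ≤ j → f j = g j := by
    intro j hj
    have hj0 : j ≠ 0 := by omega
    simp only [hf, hg, hj0, if_false]
    rw [h1 (j - 1) (by omega)]
  -- Basel
  have hB : HasSum (fun j : ℕ => (1 : ℝ) / ((j : ℝ) + 1) ^ 2) (Real.pi ^ 2 / 6) := by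
    have h := hasSum_zeta_two
    rw [← hasSum_nat_add_iff' 1] at h
    simpa using h
  have hgsum : HasSum g (u * (Real.pi ^ 2 / 6)) := by
    have := hB.mul_left u
    simpa only [hg, mul_one_div] using this
  have hdiff : HasSum (fun j => f j - g j) (∑ j ∈ Finset.range (L + 2), (f j - g j)) := by
    refine hasSum_sum_of_ne_finset_zero ?_
    intro j hj
    rw [hfg j (by simpa using hj)]
    ring
  have hfsum : HasSum f (u * (Real.pi ^ 2 / 6) + ∑ j ∈ Finset.range (L + 2), (f j - g j)) := by
    have h := hgsum.add hdiff
    convert h using 2 with j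
    ring
  have htsum : ∑' j : ℕ, f j
      = u * (Real.pi ^ 2 / 6) + ∑ j ∈ Finset.range (L + 2), (f j - g j) := hfsum.tsum_eq
  have hsf : ∑ j ∈ Finset.range (L + 2), f j
      = (∑ k ∈ Finset.range (L + 1), ppmK D k n x / ((k : ℝ) + 2) ^ 2) + u := by
    rw [Finset.sum_range_succ']
    congr 1
    · refine Finset.sum_congr rfl fun i _ => ?_
      simp only [hf, Nat.add_sub_cancel, Nat.succ_ne_zero, if_false]
      push_cast
      ring_nf
    · simp [hf]
  have hsg : ∑ j ∈ Finset.range (L + 2), g j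
      = u * (∑ k ∈ Finset.range (L + 1), 1 / ((k : ℝ) + 2) ^ 2) + u := by
    rw [Finset.sum_range_succ']
    congr 1
    · rw [Finset.mul_sum]
      refine Finset.sum_congr rfl fun i _ => ?_
      simp only [hg, mul_one_div]
      push_cast
      ring_nf
    · simp [hg]
  have hπ : Real.pi ≠ 0 := Real.pi_ne_zero
  rw [ppmTotal, ← hf, htsum, Finset.sum_sub_distrib, hsf, hsg]
  field_simp
  ring
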